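/- Let R be a G-graded ring. If the clique number of the intersection graph of graded left ideals Gr_G(R) is finite, then R is G-graded Artinian (satisfies the descending chain condition on graded left ideals). -/

import Mathlib

variable {G R : Type*} [AddGroup G] [DecidableEq G] [Ring R]

/-- The set of proper nontrivial `G`-graded left ideals of `R`. -/
def hV (𝒜 : G → AddSubgroup R) [GradedRing 𝒜] : Set (Ideal R) :=
  {I | I ≠ ⊥ ∧ I ≠ ⊤ ∧ Ideal.IsHomogeneous 𝒜 I}

/-- The intersection graph on a set of (left) ideals: two distinct ideals are
adjacent iff their intersection is nonzero. -/
def interGraph (V : Set (Ideal R)) : SimpleGraph V where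
  Adj I J := I ≠ J ∧ (I : Ideal R) ⊓ (J : Ideal R) ≠ ⊥
  symm := ⟨fun I J ⟨h1, h2⟩ => ⟨h1.symm, by rwa [inf_comm] at h2⟩⟩
  loopless := ⟨fun I ⟨h1, _⟩ => h1 rfl⟩
/-- The clique number of a simple graph, as an extended natural number. -/
noncomputable def cliqueNumE {V : Type*} (Γ : SimpleGraph V) : ℕ∞ :=
  ⨆ s : {s : Finset V // Γ.IsClique (s : Set V)}, ((s : Finset V).card : ℕ∞)

/-- If the clique number of the intersection graph of graded left
ideals is finite, then `R` is `G`-graded Artinian (DCC on graded left ideals). -/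
theorem stmt7 (𝒜 : G → AddSubgroup R) [GradedRing 𝒜]
    (h : cliqueNumE (interGraph (hV 𝒜)) < ⊤) :
    ∀ f : ℕ → Ideal R, (∀ n, Ideal.IsHomogeneous 𝒜 (f n)) →
      (∀ n, f (n + 1) ≤ f n) → ∃ n, ∀ m, n ≤ m → f m = f n := by
  intro f hhom hdec
  have hanti : Antitone f := antitone_nat_of_succ_le hdec
  -- Case: some f n = ⊥, chain stabilizes at ⊥
  by_cases hbot : ∃ n, f n = ⊥
  · obtain ⟨n, hn⟩ := hbot
    exact ⟨n, fun m hm => le_antisymm (hanti hm) (by simp [hn])⟩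
  push_neg at hbot
  -- Case: all f n = ⊤
  by_cases htop : ∀ n, f n = ⊤
  · exact ⟨0, fun m _ => by rw [htop m, htop 0]⟩
  push_neg at htop
  obtain ⟨n0, hn0⟩ := htop
  by_contra hcon
  push_neg at hcon
  -- strictly descending subsequence starting at n0
  have key : ∀ n, ∃ m, n < m ∧ f m < f n := by
    intro n
    obtain ⟨m, hm, hne⟩ := hcon n
    exact ⟨m, lt_of_le_of_ne hm (by rintro rfl; exact hne rfl),
      lt_of_le_of_ne (hanti hm) hne⟩
  choose φ hφ1 hφ2 using key
  set g : ℕ → ℕ := fun k => φ^[k] n0 with hg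
  have hgsucc : ∀ k, g (k + 1) = φ (g k) := fun k => Function.iterate_succ_apply' φ k n0
  have hFstep : ∀ k, f (g (k + 1)) < f (g k) := fun k => by
    rw [hgsucc]; exact hφ2 (g k)
  have hFanti : StrictAnti (fun k => f (g k)) := strictAnti_nat_of_succ_lt hFstep
  have hge : ∀ k, n0 ≤ g k := by
    intro k
    induction k with
    | zero => exact le_refl _
    | succ k ih => rw [hgsucc]; exact le_of_lt (lt_of_le_of_lt ih (hφ1 (g k)))
  have hFtop : ∀ k, f (g k) ≠ ⊤ := by
    intro k hk
    exact hn0 (top_le_iff.mp (hk ▸ hanti (hge k)))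
  -- vertices
  set v : ℕ → (hV 𝒜) := fun k => ⟨f (g k), hbot (g k), hFtop k, hhom (g k)⟩ with hv
  have hvinj : Function.Injective v := by
    intro i j hij
    exact hFanti.injective (congrArg Subtype.val hij)
  -- extract finite bound
  obtain ⟨N, hN⟩ := WithTop.ne_top_iff_exists.mp (ne_top_of_lt h)
  -- build a clique of size N + 1
  have hadj : ∀ i j : ℕ, i < j → (interGraph (hV 𝒜)).Adj (v i) (v j) := by
    intro i j hij
    refine ⟨?_, ?_⟩
    · exact fun hvij => (Nat.lt_irrefl i) (hvinj hvij ▸ hij)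
    · have hle : f (g j) ≤ f (g i) := le_of_lt (hFanti hij)
      show (f (g i)) ⊓ (f (g j)) ≠ ⊥
      rw [inf_eq_right.mpr hle]
      exact hbot (g j)
  classical
  set s : Finset (hV 𝒜) := (Finset.range (N + 1)).image v with hs
  have hclique : (interGraph (hV 𝒜)).IsClique (s : Set (hV 𝒜)) := by
    intro a ha b hb hab
    simp only [hs, Finset.coe_image, Set.mem_image, Finset.mem_coe] at ha hb
    obtain ⟨i, _, rfl⟩ := ha
    obtain ⟨j, _, rfl⟩ := hb
    have hij : i ≠ j := fun hij => hab (by rw [hij])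
    rcases lt_or_gt_of_ne hij with hlt | hgt
    · exact hadj i j hlt
    · exact (hadj j i hgt).symm
  have hcard : s.card = N + 1 := by
    rw [hs, Finset.card_image_of_injective _ hvinj, Finset.card_range]
  have hle : ((N + 1 : ℕ) : ℕ∞) ≤ cliqueNumE (interGraph (hV 𝒜)) := by
    have := le_iSup (fun t : {t : Finset (hV 𝒜) // (interGraph (hV 𝒜)).IsClique (t : Set (hV 𝒜))} =>
      ((t : Finset (hV 𝒜)).card : ℕ∞)) ⟨s, hclique⟩
    simpa [hcard, cliqueNumE] using this
  rw [← hN] at hle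
  have h2 : ((N + 1 : ℕ) : ℕ∞) ≤ ((N : ℕ) : ℕ∞) := hle
  rw [Nat.cast_le] at h2
  omega
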